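/- arXiv:1704.07454 — 2 statements merged into one kernel-verified Lean document; each statement's English description precedes it below -/
import Mathlib

section
/- Assume Γ is the path graph on {1,…,r}. Then every face F of the BFZ quiver Q^{u,e} belongs to the Jacobian ideal of the superpotential: the cyclic monomial w_F traversing F is cyclically equivalent to an element of J(S), where S = Σ_F ε(F)·w_F. -/
/-!  Berenstein–Fomin–Zelevinsky quivers `Q^{u,e}` as combinatorial data.

`r` is the number of nodes of the Dynkin diagram `Γ` (a finite simple graph whose
relevant nodes are `1, …, r`), `n` is the length of the reduced word
`i = (i_1, …, i_n)` for the Weyl group element `u` (and `v = e`, so every letter has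
sign `-1`), `node k = i_k` is the node of the letter at position `k` (extended by
`node (-p) = p` for `p = 1, …, r`), and `succ k = k⁺` is the successor map. -/
structure BFZe where
  r : ℤ
  n : ℤ
  Γ : SimpleGraph ℤ
  node : ℤ → ℤ
  succ : ℤ → ℤ

namespace BFZe

variable (S : BFZe)

/-- The index (vertex) set `[-r, -1] ∪ [1, n]`. -/
def Idx (k : ℤ) : Prop := (-S.r ≤ k ∧ k ≤ -1) ∨ (1 ≤ k ∧ k ≤ S.n)

/-- The axioms on the data: `r ≥ 1`, `node (-p) = p`, the nodes of the letters lie in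
`{1, …, r}`, and `succ k` is the least index `l > k` with `node l = node k`, or
`n + 1` if there is no such index. -/
def Valid : Prop :=
  1 ≤ S.r ∧ 0 ≤ S.n ∧
  (∀ p : ℤ, 1 ≤ p → p ≤ S.r → S.node (-p) = p) ∧
  (∀ k : ℤ, 1 ≤ k → k ≤ S.n → 1 ≤ S.node k ∧ S.node k ≤ S.r) ∧
  (∀ k : ℤ, S.Idx k →
    k < S.succ k ∧ S.succ k ≤ S.n + 1 ∧
    (S.succ k ≤ S.n → S.Idx (S.succ k) ∧ S.node (S.succ k) = S.node k) ∧
    (∀ l : ℤ, S.Idx l → k < l → S.node l = S.node k → S.succ k ≤ l))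

open scoped Classical in
/-- The Coxeter matrix of the Weyl group of the symmetric Kac–Moody algebra with
Dynkin diagram `Γ`:  `m_{ab} = 3` if `a` and `b` are adjacent in `Γ` and `m_{ab} = 2`
otherwise (for `a ≠ b`). -/
noncomputable def coxeterMatrix : CoxeterMatrix ℤ where
  M := Matrix.of fun a b : ℤ => if a = b then 1 else if S.Γ.Adj a b then 3 else 2
  isSymm := by
    rw [Matrix.IsSymm]
    ext a b
    by_cases h : a = b
    · simp [h]
    · simp only [Matrix.transpose_apply, Matrix.of_apply, if_neg h, if_neg (Ne.symm h)]
      rw [S.Γ.adj_comm]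
  diagonal := by intro b; simp
  off_diagonal := by
    intro a b h
    simp only [Matrix.of_apply, if_neg h]
    split <;> omega

/-- The word `(i_1, …, i_n)`, as a list of nodes of `Γ`. -/
def word : List ℤ := (List.range S.n.toNat).map (fun j => S.node ((j : ℤ) + 1))

/-- The word `i` is a reduced word (for the Weyl group element `u`) in the Weyl
(Coxeter) group associated to `Γ`. -/
noncomputable def Reduced : Prop :=
  (CoxeterMatrix.toCoxeterSystem S.coxeterMatrix).IsReduced S.word

/-- There is a horizontal arrow from `x` to `y`:  these are the arrows `k⁺ → k` for
`k` in the index set with `k⁺ ≤ n`. -/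
def HorArrow (x y : ℤ) : Prop := S.Idx y ∧ x = S.succ y ∧ x ≤ S.n

/-- There is an inclined arrow from `x` to `y`:  these are the arrows `k → l` with
`|i_k|` and `|i_l|` adjacent in `Γ` and `k < l < k⁺ < l⁺`. -/
def InclArrow (x y : ℤ) : Prop :=
  S.Idx x ∧ S.Idx y ∧ S.Γ.Adj (S.node x) (S.node y) ∧
  x < y ∧ y < S.succ x ∧ S.succ x < S.succ y

/-- The arrows of the BFZ quiver `Q^{u,e}`. -/
def Arrow (x y : ℤ) : Prop := S.HorArrow x y ∨ S.InclArrow x y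

/-- A face of `Q^{u,e}`: a chordless cycle `c : ZMod N → ℤ` (with `N ≥ 3`) of the
underlying undirected graph, i.e. consecutive vertices are joined by an arrow and no
arrow of `Q^{u,e}` joins two non-consecutive vertices. -/
def IsFace {N : ℕ} (c : ZMod N → ℤ) : Prop :=
  3 ≤ N ∧ Function.Injective c ∧
  (∀ t : ZMod N, S.Arrow (c t) (c (t + 1)) ∨ S.Arrow (c (t + 1)) (c t)) ∧
  (∀ s t : ZMod N, s ≠ t → t ≠ s + 1 → s ≠ t + 1 → ¬ S.Arrow (c s) (c t))

/-- `Γ` is the path graph (type `A_r` Dynkin diagram) on `{1, …, r}`. -/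
def IsPathGraph : Prop :=
  ∀ a b : ℤ, S.Γ.Adj a b ↔
    (1 ≤ a ∧ 1 ≤ b ∧ a ≤ S.r ∧ b ≤ S.r ∧ (b = a + 1 ∨ a = b + 1))

/-- The type of arrows of the quiver `Q^{u,e}`. -/
def Arr : Type := { p : ℤ × ℤ // S.Arrow p.1 p.2 }

/-- The source vertex of an arrow. -/
def asrc (e : S.Arr) : ℤ := e.1.1

/-- The target vertex of an arrow. -/
def atgt (e : S.Arr) : ℤ := e.1.2

/-- The product in the free associative `ℂ`-algebra on the arrows corresponding to a
list of arrows (the monomial of a path). -/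
noncomputable def pathProd (L : List S.Arr) : FreeAlgebra ℂ S.Arr :=
  (L.map (FreeAlgebra.ι ℂ)).prod

/-- A list of arrows is a path: consecutive arrows are composable. -/
def IsPathList (L : List S.Arr) : Prop :=
  L.Chain' (fun e f => S.atgt e = S.asrc f)

/-- A nonempty composable list of arrows closing up to a cycle; its monomial
`e_1 ⋯ e_N` is a cyclic monomial. -/
def IsCycList (L : List S.Arr) : Prop :=
  L ≠ [] ∧ S.IsPathList L ∧
  ∀ e ∈ L.head?, ∀ f ∈ L.getLast?, S.atgt f = S.asrc e

/-- The linear span of all `w - rot w` for cyclic monomials `w`; two elements of the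
free algebra are cyclically equivalent iff their difference lies in this span. -/
noncomputable def cycSpan : Submodule ℂ (FreeAlgebra ℂ S.Arr) :=
  Submodule.span ℂ
    {x | ∃ L : List S.Arr, S.IsCycList L ∧ x = S.pathProd L - S.pathProd (L.rotate 1)}

open scoped Classical in
/-- The cyclic derivative with respect to the arrow `a` of the cyclic monomial given
by the list `L = e_1 ⋯ e_N`:  `∑_{j : e_j = a} e_{j+1} ⋯ e_N e_1 ⋯ e_{j-1}`. -/
noncomputable def cycDeriv (a : S.Arr) (L : List S.Arr) : FreeAlgebra ℂ S.Arr :=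
  ∑ j ∈ Finset.range L.length,
    if L[j]? = some a then S.pathProd (L.drop (j + 1) ++ L.take j) else 0

/-- A face of `Q^{u,e}` as a directed cyclic list of arrows: a directed cycle visiting
no vertex twice such that any arrow of `Q^{u,e}` joining two of its vertices is one of
the (cyclically consecutive) arrows of the cycle, i.e. the cycle is chordless in the
underlying undirected graph. -/
def IsFaceList (L : List S.Arr) : Prop :=
  S.IsCycList L ∧ (L.map S.asrc).Nodup ∧
  ∀ x y : ℤ, x ∈ L.map S.asrc → y ∈ L.map S.asrc → S.Arrow x y →
    ∃ e ∈ L, S.asrc e = x ∧ S.atgt e = y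

/-- `FS` is a complete set of representatives of the faces of `Q^{u,e}`, each face
being listed exactly once up to rotation. -/
def FaceReps (FS : Finset (List S.Arr)) : Prop :=
  (∀ L ∈ FS, S.IsFaceList L) ∧
  (∀ L : List S.Arr, S.IsFaceList L → ∃ L' ∈ FS, ∃ j : ℕ, L.rotate j = L') ∧
  (∀ L ∈ FS, ∀ L' ∈ FS, (∃ j : ℕ, L.rotate j = L') → L = L')

/-- The cyclic derivative with respect to the arrow `a` of the potential
`∑_L eps L • w_L`, `L` ranging over the face representatives `FS`. -/
noncomputable def potDeriv (FS : Finset (List S.Arr)) (eps : List S.Arr → ℂ)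
    (a : S.Arr) : FreeAlgebra ℂ S.Arr :=
  ∑ L ∈ FS, eps L • S.cycDeriv a L

/-- The Jacobian ideal of the potential `∑_L eps L • w_L`: the two-sided ideal
generated by its cyclic derivatives. -/
noncomputable def jacIdeal (FS : Finset (List S.Arr)) (eps : List S.Arr → ℂ) :
    Submodule ℂ (FreeAlgebra ℂ S.Arr) :=
  Submodule.span ℂ
    {x | ∃ (p q : FreeAlgebra ℂ S.Arr) (a : S.Arr), x = p * S.potDeriv FS eps a * q}

/-- The quiver with potential `(Q^{u,e}, ∑_L eps L • w_L)` is rigid: every cyclic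
monomial is cyclically equivalent to an element of the Jacobian ideal. -/
def IsRigid (FS : Finset (List S.Arr)) (eps : List S.Arr → ℂ) : Prop :=
  ∀ L : List S.Arr, S.IsCycList L →
    ∃ y ∈ S.jacIdeal FS eps, S.pathProd L - y ∈ S.cycSpan

/-- The data describing the faces of `Q^{u,e}` in the path-graph (type A) case:
`aF L` is the node of the string containing all but one vertex of the face `L`, and
`bF L` is the node of the string containing the remaining lone vertex. -/
def FaceNodes (FS : Finset (List S.Arr)) (aF bF : List S.Arr → ℤ) : Prop :=
  ∀ L ∈ FS,
    S.Γ.Adj (aF L) (bF L) ∧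
    (∀ x ∈ L.map S.asrc, S.node x = aF L ∨ S.node x = bF L) ∧
    (∃! x, x ∈ L.map S.asrc ∧ S.node x = bF L)

/-- The orientation sign `ε(F)` of a face: `+1` if `b(F) > a(F)`, `-1` otherwise. -/
noncomputable def faceEps (aF bF : List S.Arr → ℤ) (L : List S.Arr) : ℂ :=
  if aF L < bF L then 1 else -1

/-! ### Auxiliary lemmas -/

section Aux

variable {S}

/-- Arrows connect vertices of the quiver. -/
lemma arrow_idx (hS : S.Valid) {x y : ℤ} (h : S.Arrow x y) : S.Idx x ∧ S.Idx y := by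
  obtain ⟨hr, hn, hneg, hnode, hsucc⟩ := hS
  rcases h with ⟨hy, hx, hxn⟩ | ⟨hx, hy, _⟩
  · exact ⟨hx ▸ ((hsucc y hy).2.2.1 (hx ▸ hxn)).1, hy⟩
  · exact ⟨hx, hy⟩

lemma arrow_ne (hS : S.Valid) {x y : ℤ} (h : S.Arrow x y) : x ≠ y := by
  obtain ⟨hr, hn, hneg, hnode, hsucc⟩ := hS
  rcases h with ⟨hy, hx, hxn⟩ | ⟨hx, hy, _, hlt, _⟩
  · have := (hsucc y hy).1; omega
  · omega

lemma hor_node (hS : S.Valid) {x y : ℤ} (h : S.HorArrow x y) : S.node x = S.node y := by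
  obtain ⟨hy, hx, hxn⟩ := h
  exact hx ▸ ((hS.2.2.2.2 y hy).2.2.1 (hx ▸ hxn)).2

lemma hor_uniq (hS : S.Valid) {x y y' : ℤ} (h : S.HorArrow x y) (h' : S.HorArrow x y') :
    y = y' := by
  obtain ⟨hy, hx, hxn⟩ := h
  obtain ⟨hy', hx', hxn'⟩ := h'
  by_contra hne
  have hnodey := hor_node hS ⟨hy, hx, hxn⟩
  have hnodey' := hor_node hS ⟨hy', hx', hxn'⟩
  have h1 := (hS.2.2.2.2 y hy).1
  have h2 := (hS.2.2.2.2 y' hy').1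
  rcases lt_or_gt_of_ne hne with hlt | hlt
  · have := (hS.2.2.2.2 y hy).2.2.2 y' hy' hlt (by rw [← hnodey', ← hnodey]); omega
  · have := (hS.2.2.2.2 y' hy').2.2.2 y hy hlt (by rw [← hnodey', ← hnodey]); omega

lemma incl_uniq (hS : S.Valid) {x y y' : ℤ} (h : S.InclArrow x y) (h' : S.InclArrow x y')
    (hnd : S.node y = S.node y') : y = y' := by
  obtain ⟨hx, hy, _, h1, h2, h3⟩ := h
  obtain ⟨hx', hy', _, h1', h2', h3'⟩ := h'
  by_contra hne
  rcases lt_or_gt_of_ne hne with hlt | hlt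
  · have := (hS.2.2.2.2 y hy).2.2.2 y' hy' hlt hnd.symm; omega
  · have := (hS.2.2.2.2 y' hy').2.2.2 y hy hlt hnd; omega

lemma arrow_of_arr (e : S.Arr) : S.Arrow (S.asrc e) (S.atgt e) := e.2

lemma arr_ext {e f : S.Arr} (h1 : S.asrc e = S.asrc f) (h2 : S.atgt e = S.atgt f) : e = f := by
  apply Subtype.ext
  exact Prod.ext h1 h2

/-- Distinct arrows of a list with nodup sources have distinct sources. -/
lemma src_injOn {L : List S.Arr} (h : (L.map S.asrc).Nodup) :
    ∀ e ∈ L, ∀ f ∈ L, S.asrc e = S.asrc f → e = f := by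
  intro e he f hf hef
  by_contra hne
  have hp : L.Pairwise (fun a b => S.asrc a ≠ S.asrc b) := (List.pairwise_map.mp h)
  haveI : Std.Symm (fun a b : S.Arr => S.asrc a ≠ S.asrc b) := ⟨fun a b hab hh => hab hh.symm⟩
  have := hp.forall he hf hne
  exact this hef

lemma pathProd_nil : S.pathProd [] = 1 := by simp [BFZe.pathProd]

lemma pathProd_cons (e : S.Arr) (L : List S.Arr) :
    S.pathProd (e :: L) = FreeAlgebra.ι ℂ e * S.pathProd L := by
  simp [BFZe.pathProd]

/-- Index form of the chain condition. -/
lemma chain_get {L : List S.Arr} (h : S.IsPathList L) {i : ℕ} (hi : i + 1 < L.length) :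
    S.atgt L[i] = S.asrc L[i + 1] := by
  have := List.isChain_iff_getElem.mp h i hi
  simpa using this

/-- The wrap-around condition of a cyclic list, in index form. -/
lemma cyc_wrap {L : List S.Arr} (h : S.IsCycList L) (hne : L ≠ []) :
    S.atgt (L[L.length - 1]'(by have := List.length_pos_iff.mpr hne; omega)) =
      S.asrc (L[0]'(List.length_pos_iff.mpr hne)) := by
  have h1 : L.head? = some (L.head hne) := List.head?_eq_head hne
  have h2 : L.getLast? = some (L.getLast hne) := List.getLast?_eq_getLast_of_ne_nil hne
  have := h.2.2 (L.head hne) (by rw [h1]; rfl) (L.getLast hne) (by rw [h2]; rfl)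
  rwa [List.getLast_eq_getElem, List.head_eq_getElem_zero hne] at this

/-- Targets of arrows of a cyclic list are sources of arrows of the list. -/
lemma atgt_mem_srcs {L : List S.Arr} (h : S.IsCycList L) {e : S.Arr} (he : e ∈ L) :
    S.atgt e ∈ L.map S.asrc := by
  obtain ⟨i, hi, rfl⟩ := List.mem_iff_getElem.mp he
  by_cases hi1 : i + 1 < L.length
  · rw [chain_get h.2.1 hi1]
    exact List.mem_map_of_mem (List.getElem_mem _)
  · have hieq : i = L.length - 1 := by omega
    subst hieq
    rw [cyc_wrap h h.1]
    exact List.mem_map_of_mem (List.getElem_mem _)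

/-- Rotating a cyclic list by one is cyclic. -/
lemma isCycList_rotate_one {L : List S.Arr} (h : S.IsCycList L) : S.IsCycList (L.rotate 1) := by
  obtain ⟨hne, hch, hcyc⟩ := h
  obtain ⟨x, t, rfl⟩ := List.exists_cons_of_ne_nil hne
  rw [List.rotate_cons_succ, List.rotate_zero]
  rcases eq_or_ne t [] with rfl | htne
  · exact ⟨by simp, List.isChain_singleton _, by simpa using hcyc⟩
  refine ⟨by simp, ?_, ?_⟩
  · rw [BFZe.IsPathList]; unfold List.Chain'; rw [List.isChain_append]
    refine ⟨(List.isChain_cons.mp hch).2, List.isChain_singleton _, ?_⟩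
    intro a ha y hy
    simp only [List.head?_cons, Option.mem_def, Option.some.injEq] at hy
    subst hy
    have hlast : (x :: t).getLast? = some a := by
      rw [List.getLast?_cons, ha]; simp [htne]
    exact hcyc x rfl a hlast
  · intro e he f hf
    rw [List.head?_append_of_ne_nil _ htne] at he
    rw [List.getLast?_concat] at hf
    simp only [Option.mem_def, Option.some.injEq] at hf
    subst hf
    have := (List.isChain_cons.mp hch).1 e he
    exact this

lemma isCycList_rotate {L : List S.Arr} (h : S.IsCycList L) (j : ℕ) :
    S.IsCycList (L.rotate j) := by
  induction j with
  | zero => simpa using h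
  | succ n ih =>
    have : L.rotate (n + 1) = (L.rotate n).rotate 1 := by rw [List.rotate_rotate]
    rw [this]
    exact isCycList_rotate_one ih

/-- Rotations of a cyclic monomial are cyclically equivalent. -/
lemma rotate_mem_cycSpan {L : List S.Arr} (h : S.IsCycList L) (j : ℕ) :
    S.pathProd L - S.pathProd (L.rotate j) ∈ S.cycSpan := by
  induction j with
  | zero => simpa using Submodule.zero_mem _
  | succ n ih =>
    have h2 : S.pathProd (L.rotate n) - S.pathProd ((L.rotate n).rotate 1) ∈ S.cycSpan :=
      Submodule.subset_span ⟨L.rotate n, isCycList_rotate h n, rfl⟩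
    have h3 : S.pathProd L - S.pathProd (L.rotate (n + 1)) =
        (S.pathProd L - S.pathProd (L.rotate n)) +
        (S.pathProd (L.rotate n) - S.pathProd ((L.rotate n).rotate 1)) := by
      rw [List.rotate_rotate]
      abel
    rw [h3]
    exact Submodule.add_mem _ ih h2

open scoped Classical in
lemma mul_cycDeriv (L : List S.Arr) (a : S.Arr) :
    FreeAlgebra.ι ℂ a * S.cycDeriv a L =
      ∑ j ∈ Finset.range L.length,
        if L[j]? = some a then S.pathProd (L.rotate j) else 0 := by
  classical
  rw [BFZe.cycDeriv, Finset.mul_sum]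
  refine Finset.sum_congr rfl fun j hj => ?_
  rw [Finset.mem_range] at hj
  by_cases hja : L[j]? = some a
  · rw [if_pos hja, if_pos hja]
    have hLa : L[j] = a := by
      have := List.getElem?_eq_getElem hj
      rw [hja] at this; exact (Option.some.injEq _ _).mp this.symm
    rw [List.rotate_eq_drop_append_take (by omega), ← List.getElem_cons_drop hj,
      List.cons_append, pathProd_cons, hLa]
  · rw [if_neg hja, if_neg hja, mul_zero]

open scoped Classical in
lemma sum_ite_getElem {M : Type*} [AddCommMonoid M] {L : List S.Arr} (hnd : L.Nodup)
    (a : S.Arr) (x : M) :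
    (∑ j ∈ Finset.range L.length, if L[j]? = some a then x else 0) =
      if a ∈ L then x else 0 := by
  classical
  by_cases hmem : a ∈ L
  · rw [if_pos hmem]
    have hlt : L.idxOf a < L.length := List.idxOf_lt_length_iff.mpr hmem
    rw [Finset.sum_eq_single_of_mem (L.idxOf a) (Finset.mem_range.mpr hlt)]
    · rw [if_pos]
      rw [List.getElem?_eq_getElem hlt, List.getElem_idxOf]
    · intro j hj hne
      rw [Finset.mem_range] at hj
      rw [if_neg]
      intro hja
      have hLa : L[j] = a := by
        have := List.getElem?_eq_getElem hj
        rw [hja] at this; exact (Option.some.injEq _ _).mp this.symm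
      have : L[j] = L[L.idxOf a]'hlt := by rw [hLa, List.getElem_idxOf]
      exact hne ((hnd.getElem_inj_iff).mp this)
  · rw [if_neg hmem]
    refine Finset.sum_eq_zero fun j hj => ?_
    rw [Finset.mem_range] at hj
    rw [if_neg]
    intro hja
    exact hmem (List.mem_of_getElem? hja)

open scoped Classical in
/-- Key computation: `a · ∂ₐ w_L` is cyclically equivalent to `[a ∈ L] · w_L`. -/
lemma mul_cycDeriv_mem {L : List S.Arr} (h : S.IsCycList L) (hnd : L.Nodup) (a : S.Arr) :
    FreeAlgebra.ι ℂ a * S.cycDeriv a L -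
      (if a ∈ L then (1 : ℂ) else 0) • S.pathProd L ∈ S.cycSpan := by
  classical
  rw [mul_cycDeriv]
  have h2 : (if a ∈ L then (1 : ℂ) else 0) • S.pathProd L =
      ∑ j ∈ Finset.range L.length, if L[j]? = some a then S.pathProd L else 0 := by
    rw [sum_ite_getElem hnd a (S.pathProd L)]
    split <;> simp
  rw [h2, ← Finset.sum_sub_distrib]
  refine Submodule.sum_mem _ fun j hj => ?_
  by_cases hja : L[j]? = some a
  · rw [if_pos hja, if_pos hja]
    have := rotate_mem_cycSpan h j
    have := Submodule.neg_mem _ this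
    simpa using this
  · rw [if_neg hja, if_neg hja]
    simpa using Submodule.zero_mem _

lemma cyc_key {A B : List S.Arr} (hA : S.IsCycList A) (hB : S.IsCycList B)
    (det : ∀ e ∈ A, ∀ f ∈ B, S.asrc e = S.asrc f → e = f)
    (h0 : S.asrc (A[0]'(List.length_pos_iff.mpr hA.1)) = S.asrc (B[0]'(List.length_pos_iff.mpr hB.1))) :
    ∀ i, ∀ (h1 : i < A.length) (h2 : i < B.length), A[i] = B[i] := by
  intro i
  induction i with
  | zero => intro h1 h2; exact det _ (List.getElem_mem _) _ (List.getElem_mem _) h0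
  | succ k ih =>
    intro h1 h2
    have hk : A[k] = B[k] := ih (by omega) (by omega)
    refine det _ (List.getElem_mem _) _ (List.getElem_mem _) ?_
    rw [← chain_get hA.2.1 h1, ← chain_get hB.2.1 h2, hk]

lemma cyc_wrap' {L : List S.Arr} (h : S.IsCycList L) {k : ℕ} (hk : L.length = k + 1) :
    S.atgt (L[k]'(by omega)) = S.asrc (L[0]'(by omega)) := by
  have hne := h.1
  have h1 : L.head? = some (L.head hne) := List.head?_eq_head hne
  have h2 : L.getLast? = some (L.getLast hne) := List.getLast?_eq_getLast_of_ne_nil hne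
  have h3 := h.2.2 _ (by rw [h1]; rfl) _ (by rw [h2]; rfl)
  rw [List.getLast_eq_getElem, List.head_eq_getElem_zero hne] at h3
  have hk' : k = L.length - 1 := by omega
  subst hk'
  exact h3

lemma cyc_no_lt {A B : List S.Arr} (hA : S.IsCycList A) (hB : S.IsCycList B)
    (nB : (B.map S.asrc).Nodup)
    (key : ∀ i, ∀ (h1 : i < A.length) (h2 : i < B.length), A[i] = B[i])
    (h0 : S.asrc (A[0]'(List.length_pos_iff.mpr hA.1)) = S.asrc (B[0]'(List.length_pos_iff.mpr hB.1))) :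
    ¬ A.length < B.length := by
  intro hlt
  have hApos : 0 < A.length := List.length_pos_iff.mpr hA.1
  have hBpos : 0 < B.length := List.length_pos_iff.mpr hB.1
  obtain ⟨k, hk⟩ : ∃ k, A.length = k + 1 := ⟨A.length - 1, by omega⟩
  have pA : k < A.length := by omega
  have pB : k < B.length := by omega
  have pB1 : k + 1 < B.length := by omega
  have h1 : A[k]'pA = B[k]'pB := key _ pA pB
  have h2 : S.atgt (B[k]'pB) = S.asrc (B[k + 1]'pB1) := chain_get hB.2.1 pB1
  have h3 : S.atgt (A[k]'pA) = S.asrc (A[0]'hApos) := cyc_wrap' hA hk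
  have h4 : S.asrc (B[k + 1]'pB1) = S.asrc (B[0]'hBpos) := by
    rw [← h2, ← h1, h3]
    exact h0
  have h5 : (B.map S.asrc)[k + 1]'(by simpa using pB1) =
      (B.map S.asrc)[0]'(by simpa using hBpos) := by
    rw [List.getElem_map, List.getElem_map]
    exact h4
  have := nB.getElem_inj_iff.mp h5
  omega

lemma cyc_eq {A B : List S.Arr} (hA : S.IsCycList A) (hB : S.IsCycList B)
    (nA : (A.map S.asrc).Nodup) (nB : (B.map S.asrc).Nodup)
    (det : ∀ e ∈ A, ∀ f ∈ B, S.asrc e = S.asrc f → e = f)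
    (h0 : S.asrc (A[0]'(List.length_pos_iff.mpr hA.1)) = S.asrc (B[0]'(List.length_pos_iff.mpr hB.1))) :
    A = B := by
  have key := cyc_key hA hB det h0
  have key' : ∀ i, ∀ (h1 : i < B.length) (h2 : i < A.length), B[i] = A[i] :=
    fun i h1 h2 => (key i h2 h1).symm
  have hle1 := cyc_no_lt hA hB nB key h0
  have hle2 := cyc_no_lt hB hA nA key' h0.symm
  have hlen : A.length = B.length := by omega
  exact List.ext_getElem hlen key

lemma det_face_aux (hS : S.Valid) {L M : List S.Arr} (aa bb ℓ : ℤ)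
    (hL : S.IsFaceList L) (hM : S.IsFaceList M)
    (hLn : ∀ x ∈ L.map S.asrc, S.node x = aa ∨ S.node x = bb)
    (hMn : ∀ x ∈ M.map S.asrc, S.node x = aa ∨ S.node x = bb)
    (hLu : ∀ x ∈ L.map S.asrc, S.node x = bb → x = ℓ)
    (hMu : ∀ x ∈ M.map S.asrc, S.node x = bb → x = ℓ)
    (hℓL : ℓ ∈ L.map S.asrc)
    (hab : aa ≠ bb)
    {e f : S.Arr} (heL : e ∈ L) (hfM : f ∈ M) (hsrc : S.asrc e = S.asrc f)
    (he : S.HorArrow (S.asrc e) (S.atgt e)) (hf : S.InclArrow (S.asrc f) (S.atgt f)) :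
    False := by
  have hxL : S.asrc e ∈ L.map S.asrc := List.mem_map_of_mem heL
  have hyL : S.atgt e ∈ L.map S.asrc := atgt_mem_srcs hL.1 heL
  have hzM : S.atgt f ∈ M.map S.asrc := atgt_mem_srcs hM.1 hfM
  have hnyx : S.node (S.atgt e) = S.node (S.asrc e) := (hor_node hS he).symm
  have hnz : S.node (S.asrc f) ≠ S.node (S.atgt f) := hf.2.2.1.ne
  rcases hLn _ hxL with hxa | hxb
  · have hza : S.node (S.atgt f) = bb := by
      rcases hMn _ hzM with h | h
      · exact absurd (h.trans (by rw [← hsrc, hxa])) hnz.symm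
      · exact h
    have hzℓ : S.atgt f = ℓ := hMu _ hzM hza
    have harr : S.Arrow (S.asrc e) (S.atgt f) := by
      rw [hsrc]; exact arrow_of_arr f
    obtain ⟨g, hgL, hg1, hg2⟩ :=
      hL.2.2 (S.asrc e) (S.atgt f) hxL (by rw [hzℓ]; exact hℓL) harr
    have hge : g = e := src_injOn hL.2.1 g hgL e heL hg1
    have h1 : S.node (S.atgt e) = bb := by rw [← hge, hg2, hzℓ]; rw [hzℓ] at hza; exact hza
    rw [hnyx, hxa] at h1
    exact hab h1
  · have hxℓ : S.asrc e = ℓ := hLu _ hxL hxb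
    have hyb : S.node (S.atgt e) = bb := by rw [hnyx, hxb]
    have hyℓ : S.atgt e = ℓ := hLu _ hyL hyb
    exact arrow_ne hS (arrow_of_arr e) (by rw [hxℓ, hyℓ])

/-- Determinism: arrows of the two faces `L`, `M` (with the same strings `aa`, `bb` and
the same lone vertex `ℓ`) are determined by their sources. -/
lemma det_face (hS : S.Valid) {L M : List S.Arr} (aa bb ℓ : ℤ)
    (hL : S.IsFaceList L) (hM : S.IsFaceList M)
    (hLn : ∀ x ∈ L.map S.asrc, S.node x = aa ∨ S.node x = bb)
    (hMn : ∀ x ∈ M.map S.asrc, S.node x = aa ∨ S.node x = bb)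
    (hLu : ∀ x ∈ L.map S.asrc, S.node x = bb → x = ℓ)
    (hMu : ∀ x ∈ M.map S.asrc, S.node x = bb → x = ℓ)
    (hℓL : ℓ ∈ L.map S.asrc) (hℓM : ℓ ∈ M.map S.asrc)
    (hab : aa ≠ bb) :
    ∀ e ∈ L, ∀ f ∈ M, S.asrc e = S.asrc f → e = f := by
  intro e heL f hfM hsrc
  rcases arrow_of_arr e with he | he
  · rcases arrow_of_arr f with hf | hf
    · have hf' : S.HorArrow (S.asrc e) (S.atgt f) := by rw [hsrc]; exact hf
      exact arr_ext hsrc (hor_uniq hS he hf')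
    · exact absurd (det_face_aux hS aa bb ℓ hL hM hLn hMn hLu hMu hℓL hab
        heL hfM hsrc he hf) (not_false)
  · rcases arrow_of_arr f with hf | hf
    · exact absurd (det_face_aux hS aa bb ℓ hM hL hMn hLn hMu hLu hℓM hab
        hfM heL hsrc.symm hf he) (not_false)
    · -- both inclined
      have hxL : S.asrc e ∈ L.map S.asrc := List.mem_map_of_mem heL
      have hyL : S.atgt e ∈ L.map S.asrc := atgt_mem_srcs hL.1 heL
      have hzM : S.atgt f ∈ M.map S.asrc := atgt_mem_srcs hM.1 hfM
      have hne1 : S.node (S.asrc e) ≠ S.node (S.atgt e) := he.2.2.1.ne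
      have hne2 : S.node (S.asrc f) ≠ S.node (S.atgt f) := hf.2.2.1.ne
      rcases hLn _ hxL with hxa | hxb
      · have hy : S.atgt e = ℓ := by
          rcases hLn _ hyL with h | h
          · exact absurd (hxa.trans h.symm) hne1
          · exact hLu _ hyL h
        have hz : S.atgt f = ℓ := by
          rcases hMn _ hzM with h | h
          · exact absurd ((hsrc.symm ▸ hxa : S.node (S.asrc f) = aa).trans h.symm) hne2
          · exact hMu _ hzM h
        exact arr_ext hsrc (hy.trans hz.symm)
      · have hy : S.node (S.atgt e) = aa := by
          rcases hLn _ hyL with h | h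
          · exact h
          · exact absurd (hxb.trans h.symm) hne1
        have hz : S.node (S.atgt f) = aa := by
          rcases hMn _ hzM with h | h
          · exact h
          · exact absurd ((hsrc.symm ▸ hxb : S.node (S.asrc f) = bb).trans h.symm) hne2
        have hf' : S.InclArrow (S.asrc e) (S.atgt f) := by rw [hsrc]; exact hf
        exact arr_ext hsrc (incl_uniq hS he hf' (hy.trans hz.symm))

/-- Two face representatives sharing an arrow, whose arrows are determined by sources,
are equal. -/
lemma face_eq_of_shared {FS : Finset (List S.Arr)} (hFS : S.FaceReps FS)
    {L M : List S.Arr} (hLFS : L ∈ FS) (hMFS : M ∈ FS) {a : S.Arr}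
    (haL : a ∈ L) (haM : a ∈ M)
    (det : ∀ e ∈ L, ∀ f ∈ M, S.asrc e = S.asrc f → e = f) : L = M := by
  classical
  have hLface := hFS.1 L hLFS
  have hMface := hFS.1 M hMFS
  have hjL : L.idxOf a < L.length := List.idxOf_lt_length_iff.mpr haL
  have hjM : M.idxOf a < M.length := List.idxOf_lt_length_iff.mpr haM
  set jL := L.idxOf a with hjLdef
  set jM := M.idxOf a with hjMdef
  have hA : S.IsCycList (L.rotate jL) := isCycList_rotate hLface.1 _
  have hB : S.IsCycList (M.rotate jM) := isCycList_rotate hMface.1 _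
  have nA : ((L.rotate jL).map S.asrc).Nodup := by
    rw [List.map_rotate]; exact List.nodup_rotate.mpr hLface.2.1
  have nB : ((M.rotate jM).map S.asrc).Nodup := by
    rw [List.map_rotate]; exact List.nodup_rotate.mpr hMface.2.1
  have det' : ∀ e ∈ L.rotate jL, ∀ f ∈ M.rotate jM, S.asrc e = S.asrc f → e = f :=
    fun e he f hf h => det e (List.mem_rotate.mp he) f (List.mem_rotate.mp hf) h
  have hA0 : (L.rotate jL)[0]'(List.length_pos_iff.mpr hA.1) = a := by
    simp only [List.getElem_rotate, Nat.zero_add, Nat.mod_eq_of_lt hjL]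
    exact List.getElem_idxOf hjL
  have hB0 : (M.rotate jM)[0]'(List.length_pos_iff.mpr hB.1) = a := by
    simp only [List.getElem_rotate, Nat.zero_add, Nat.mod_eq_of_lt hjM]
    exact List.getElem_idxOf hjM
  have heq : L.rotate jL = M.rotate jM :=
    cyc_eq hA hB nA nB det' (by rw [hA0, hB0])
  have hrot : L.rotate (jL + (M.length - jM)) = M := by
    rw [← List.rotate_rotate, heq, List.rotate_rotate,
      Nat.add_sub_cancel' (le_of_lt hjM), List.rotate_length]
  exact hFS.2.2 L hLFS M hMFS ⟨_, hrot⟩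

/-- Every face has a witness arrow (out of the lone vertex): every other face
containing it has a strictly larger lone vertex. -/
lemma witness (hS : S.Valid) {FS : Finset (List S.Arr)} (hFS : S.FaceReps FS)
    {aF bF : List S.Arr → ℤ} (hab : S.FaceNodes FS aF bF)
    (lone : List S.Arr → ℤ)
    (hlone : ∀ L ∈ FS, lone L ∈ L.map S.asrc ∧ S.node (lone L) = bF L ∧
      (∀ x ∈ L.map S.asrc, S.node x = bF L → x = lone L))
    (L0 : List S.Arr) (hL0 : L0 ∈ FS) :
    ∃ a ∈ L0, S.asrc a = lone L0 ∧
      ∀ L ∈ FS, a ∈ L → L ≠ L0 → lone L0 < lone L := by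
  obtain ⟨hmem, hnode, huniq⟩ := hlone L0 hL0
  obtain ⟨a, haL0, hasrc⟩ := List.mem_map.mp hmem
  refine ⟨a, haL0, hasrc, ?_⟩
  have hface0 := hFS.1 L0 hL0
  have habL0 := hab L0 hL0
  have hadj := habL0.1
  have hne0 : aF L0 ≠ bF L0 := hadj.ne
  have htmem : S.atgt a ∈ L0.map S.asrc := atgt_mem_srcs hface0.1 haL0
  have htne : S.atgt a ≠ lone L0 := by
    intro h
    exact arrow_ne hS (arrow_of_arr a) (by rw [hasrc, h])
  have htnode : S.node (S.atgt a) = aF L0 := by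
    rcases habL0.2.1 _ htmem with h | h
    · exact h
    · exact absurd (huniq _ htmem h) htne
  -- `a` is inclined, so its source is smaller than its target
  have hlt : S.asrc a < S.atgt a := by
    rcases arrow_of_arr a with hhor | hincl
    · exfalso
      have := hor_node hS hhor
      rw [hasrc, hnode, htnode] at this
      exact hne0 this.symm
    · exact hincl.2.2.2.1
  intro L hLFS haL hne
  obtain ⟨hmemL, hnodeL, huniqL⟩ := hlone L hLFS
  have habL := hab L hLFS
  have hxL : lone L0 ∈ L.map S.asrc := by
    rw [← hasrc]; exact List.mem_map_of_mem haL
  have htL : S.atgt a ∈ L.map S.asrc := atgt_mem_srcs (hFS.1 L hLFS).1 haL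
  rcases habL.2.1 _ hxL with hca | hcb
  · -- `lone L0` lies on the `a`-string of `L`, so the target is the lone vertex of `L`
    have hta : S.node (S.atgt a) = bF L := by
      rcases habL.2.1 _ htL with h | h
      · exfalso
        have e1 : bF L0 = aF L := by rw [← hnode, hca]
        have e2 : aF L0 = aF L := by rw [← htnode, h]
        exact hne0 (by rw [e2, ← e1])
      · exact h
    have h1 : S.atgt a = lone L := huniqL _ htL hta
    rw [← hasrc, ← h1]
    exact hlt
  · -- `lone L0` is the lone vertex of `L` as well: the two faces coincide
    exfalso
    have hℓlone : lone L0 = lone L := huniqL _ hxL hcb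
    have htaL : S.node (S.atgt a) = aF L := by
      rcases habL.2.1 _ htL with h | h
      · exact h
      · exfalso
        have := huniqL _ htL h
        rw [← hℓlone] at this
        exact htne this
    have haFL : aF L = aF L0 := by rw [← htaL, htnode]
    have hbFL : bF L = bF L0 := by rw [← hcb, hnode]
    have hdet : ∀ e ∈ L, ∀ f ∈ L0, S.asrc e = S.asrc f → e = f := by
      refine det_face hS (aF L0) (bF L0) (lone L0) (hFS.1 L hLFS) hface0 ?_ ?_ ?_ ?_ ?_ ?_ hne0
      · intro x hx
        rcases habL.2.1 _ hx with h | h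
        · exact Or.inl (by rw [← haFL]; exact h)
        · exact Or.inr (by rw [← hbFL]; exact h)
      · exact habL0.2.1
      · intro x hx hxb
        have hxx := huniqL x hx (by rw [hbFL]; exact hxb)
        rw [hxx, ← hℓlone]
      · exact huniq
      · exact hxL
      · exact hmem
    exact hne (face_eq_of_shared hFS hLFS hL0 haL haL0 hdet)

open scoped Classical in
/-- The key induction: every face representative is, up to cyclic equivalence, in the
Jacobian ideal. -/
lemma key_lemma (hS : S.Valid) {FS : Finset (List S.Arr)} (hFS : S.FaceReps FS)
    {aF bF : List S.Arr → ℤ} (hab : S.FaceNodes FS aF bF)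
    (lone : List S.Arr → ℤ)
    (hlone : ∀ L ∈ FS, lone L ∈ L.map S.asrc ∧ S.node (lone L) = bF L ∧
      (∀ x ∈ L.map S.asrc, S.node x = bF L → x = lone L)) :
    ∀ m : ℕ, ∀ L0 ∈ FS, (FS.filter fun L' => lone L0 < lone L').card ≤ m →
      ∃ y ∈ S.jacIdeal FS (S.faceEps aF bF), S.pathProd L0 - y ∈ S.cycSpan := by
  intro m
  induction m using Nat.strong_induction_on with
  | _ m IH =>
  intro L0 hL0 hcard
  obtain ⟨a, haL0, hasrc, hkey⟩ := witness hS hFS hab lone hlone L0 hL0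
  have hz0mem : FreeAlgebra.ι ℂ a * S.potDeriv FS (S.faceEps aF bF) a ∈ S.jacIdeal FS (S.faceEps aF bF) :=
    Submodule.subset_span ⟨FreeAlgebra.ι ℂ a, 1, a, by rw [mul_one]⟩
  have hsum : FreeAlgebra.ι ℂ a * S.potDeriv FS (S.faceEps aF bF) a -
      ∑ L ∈ FS, (S.faceEps aF bF L * if a ∈ L then (1 : ℂ) else 0) • S.pathProd L ∈ S.cycSpan := by
    rw [BFZe.potDeriv, Finset.mul_sum, ← Finset.sum_sub_distrib]
    refine Submodule.sum_mem _ fun L hL => ?_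
    rw [mul_smul_comm, mul_smul]
    rw [← smul_sub]
    exact Submodule.smul_mem _ _
      (mul_cycDeriv_mem (hFS.1 L hL).1 ((hFS.1 L hL).2.1.of_map) a)
  set T := (FS.filter fun L => a ∈ L).erase L0 with hT
  have hL0f : L0 ∈ FS.filter fun L => a ∈ L := Finset.mem_filter.mpr ⟨hL0, haL0⟩
  have hsplit : ∑ L ∈ FS, (S.faceEps aF bF L * if a ∈ L then (1 : ℂ) else 0) • S.pathProd L
      = S.faceEps aF bF L0 • S.pathProd L0 + ∑ L ∈ T, S.faceEps aF bF L • S.pathProd L := by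
    rw [← Finset.sum_filter_add_sum_filter_not FS (fun L => a ∈ L)]
    have h2 : ∑ L ∈ FS.filter (fun L => ¬ a ∈ L),
        (S.faceEps aF bF L * if a ∈ L then (1 : ℂ) else 0) • S.pathProd L = 0 := by
      refine Finset.sum_eq_zero fun L hL => ?_
      rw [if_neg (Finset.mem_filter.mp hL).2, mul_zero, zero_smul]
    rw [h2, add_zero]
    have h3 : ∑ L ∈ FS.filter (fun L => a ∈ L),
        (S.faceEps aF bF L * if a ∈ L then (1 : ℂ) else 0) • S.pathProd L =
        ∑ L ∈ FS.filter (fun L => a ∈ L), S.faceEps aF bF L • S.pathProd L := by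
      refine Finset.sum_congr rfl fun L hL => ?_
      rw [if_pos (Finset.mem_filter.mp hL).2, mul_one]
    rw [h3, ← Finset.sum_erase_add _ _ hL0f, add_comm]
  have hTmem : ∀ L ∈ T, ∃ y ∈ S.jacIdeal FS (S.faceEps aF bF), S.pathProd L - y ∈ S.cycSpan := by
    intro L hLT
    have hLf := Finset.mem_of_mem_erase hLT
    have hLFS : L ∈ FS := (Finset.mem_filter.mp hLf).1
    have haL : a ∈ L := (Finset.mem_filter.mp hLf).2
    have hneq : L ≠ L0 := Finset.ne_of_mem_erase hLT
    have hlt := hkey L hLFS haL hneq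
    have hsub : FS.filter (fun L' => lone L < lone L') ⊆
        FS.filter (fun L' => lone L0 < lone L') := by
      intro L'' h''
      rw [Finset.mem_filter] at h'' ⊢
      exact ⟨h''.1, lt_trans hlt h''.2⟩
    have hmemL : L ∈ FS.filter (fun L' => lone L0 < lone L') :=
      Finset.mem_filter.mpr ⟨hLFS, hlt⟩
    have hnotmem : L ∉ FS.filter (fun L' => lone L < lone L') := by
      rw [Finset.mem_filter]
      rintro ⟨-, h⟩
      exact lt_irrefl _ h
    have hcard' : (FS.filter fun L' => lone L < lone L').card <
        (FS.filter fun L' => lone L0 < lone L').card :=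
      Finset.card_lt_card ⟨hsub, fun hsup => hnotmem (hsup hmemL)⟩
    exact IH _ (by omega) L hLFS (le_refl _)
  choose! Y hY1 hY2 using hTmem
  have hsq : S.faceEps aF bF L0 * S.faceEps aF bF L0 = 1 := by
    unfold BFZe.faceEps
    split <;> norm_num
  refine ⟨S.faceEps aF bF L0 • (FreeAlgebra.ι ℂ a * S.potDeriv FS (S.faceEps aF bF) a - ∑ L ∈ T, S.faceEps aF bF L • Y L), ?_, ?_⟩
  · exact Submodule.smul_mem _ _ (Submodule.sub_mem _ hz0mem
      (Submodule.sum_mem _ fun L hL => Submodule.smul_mem _ _ (hY1 L hL)))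
  · have hA : FreeAlgebra.ι ℂ a * S.potDeriv FS (S.faceEps aF bF) a -
        (S.faceEps aF bF L0 • S.pathProd L0 + ∑ L ∈ T, S.faceEps aF bF L • S.pathProd L) ∈ S.cycSpan := by
      rw [← hsplit]; exact hsum
    have hB : ∑ L ∈ T, S.faceEps aF bF L • (S.pathProd L - Y L) ∈ S.cycSpan :=
      Submodule.sum_mem _ fun L hL => Submodule.smul_mem _ _ (hY2 L hL)
    have hC := Submodule.neg_mem _
      (Submodule.smul_mem _ (S.faceEps aF bF L0) (Submodule.add_mem _ hA hB))
    have hid : S.pathProd L0 -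
        S.faceEps aF bF L0 • (FreeAlgebra.ι ℂ a * S.potDeriv FS (S.faceEps aF bF) a - ∑ L ∈ T, S.faceEps aF bF L • Y L) =
        -((S.faceEps aF bF L0) • ((FreeAlgebra.ι ℂ a * S.potDeriv FS (S.faceEps aF bF) a -
          (S.faceEps aF bF L0 • S.pathProd L0 + ∑ L ∈ T, S.faceEps aF bF L • S.pathProd L)) +
          ∑ L ∈ T, S.faceEps aF bF L • (S.pathProd L - Y L))) := by
      simp only [smul_sub, smul_add, Finset.sum_sub_distrib, smul_smul, hsq, one_smul,
        neg_sub, neg_add]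
      abel
    rw [hid]
    exact hC

end Aux

/-- Assume `Γ` is the path graph on `{1, …, r}`.  Then every face
`F` of the BFZ quiver `Q^{u,e}` belongs to the Jacobian ideal of the superpotential:
the cyclic monomial `w_F` traversing `F` is cyclically equivalent to an element of
`J(S)`, where `S = ∑_F ε(F) • w_F`. -/
theorem face_mem_jacIdeal (hS : S.Valid) (hred : S.Reduced)
    (hpath : S.IsPathGraph)
    (FS : Finset (List S.Arr)) (hFS : S.FaceReps FS)
    (aF bF : List S.Arr → ℤ) (hab : S.FaceNodes FS aF bF) :
    ∀ L : List S.Arr, S.IsFaceList L →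
      ∃ y ∈ S.jacIdeal FS (S.faceEps aF bF), S.pathProd L - y ∈ S.cycSpan := by
  classical
  intro L hLface
  obtain ⟨L', hL'FS, j, hrot⟩ := hFS.2.1 L hLface
  have hex : ∀ M ∈ FS, ∃ x, (x ∈ M.map S.asrc ∧ S.node x = bF M) ∧
      ∀ y ∈ M.map S.asrc, S.node y = bF M → y = x := by
    intro M hM
    obtain ⟨x, hx, hu⟩ := (hab M hM).2.2
    exact ⟨x, hx, fun y hy hn => hu y ⟨hy, hn⟩⟩
  choose! lone hlone1 hlone2 using hex
  obtain ⟨y, hy1, hy2⟩ := key_lemma hS hFS hab lone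
    (fun M hM => ⟨(hlone1 M hM).1, (hlone1 M hM).2, hlone2 M hM⟩)
    ((FS.filter fun L'' => lone L' < lone L'').card) L' hL'FS (le_refl _)
  refine ⟨y, hy1, ?_⟩
  have h1 := rotate_mem_cycSpan hLface.1 j
  rw [hrot] at h1
  have h2 := Submodule.add_mem _ h1 hy2
  have h3 : (S.pathProd L - S.pathProd L') + (S.pathProd L' - y) = S.pathProd L - y := by
    abel
  rwa [h3] at h2

end BFZe
end

section
/- Assume Γ is the path graph on {1,…,r}. Every simple (non-self-intersecting) directed cycle C of the BFZ quiver Q^{u,e} that is not itself a face is differentiable with respect to some arrow: there exist a face F of Q^{u,e} and an arrow e of F such that e does not lie on C and the arrows of F other than e form a consecutive directed subpath of C. -/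
namespace BFZe

variable (S : BFZe)

/-! ### Auxiliary lemmas -/

lemma valid_succ_gt (hS : S.Valid) {k : ℤ} (hk : S.Idx k) : k < S.succ k :=
  (hS.2.2.2.2 k hk).1

lemma valid_succ_node (hS : S.Valid) {k : ℤ} (hk : S.Idx k) (h : S.succ k ≤ S.n) :
    S.Idx (S.succ k) ∧ S.node (S.succ k) = S.node k :=
  (hS.2.2.2.2 k hk).2.2.1 h

/-- Facts about a horizontal arrow. -/
lemma hor_facts (hS : S.Valid) {u v : ℤ} (h : S.HorArrow u v) :
    S.node u = S.node v ∧ S.Idx u ∧ S.Idx v ∧ v < u := by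
  obtain ⟨hIv, he, hn⟩ := h
  have hsn : S.succ v ≤ S.n := he ▸ hn
  have h1 := valid_succ_node S hS hIv hsn
  have h2 := valid_succ_gt S hS hIv
  exact ⟨he ▸ h1.2, he ▸ h1.1, hIv, he ▸ h2⟩

/-- Every arrow is either horizontal (decreasing) or inclined (increasing). -/
lemma arrow_cases (hS : S.Valid) {u v : ℤ} (h : S.Arrow u v) :
    (S.HorArrow u v ∧ v < u) ∨ (S.InclArrow u v ∧ u < v) := by
  rcases h with h | h
  · exact Or.inl ⟨h, (hor_facts S hS h).2.2.2⟩
  · exact Or.inr ⟨h, h.2.2.2.1⟩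

/-- A maximum for an integer-valued key over a nonempty list. -/
lemma exists_max_key {α : Type*} (key : α → ℤ) :
    ∀ (l : List α), l ≠ [] → ∃ a ∈ l, ∀ b ∈ l, key b ≤ key a := by
  intro l
  induction l with
  | nil => intro h; exact absurd rfl h
  | cons a t ih =>
    intro _
    rcases eq_or_ne t [] with rfl | hne
    · refine ⟨a, List.mem_cons_self, ?_⟩
      intro b hb
      rcases List.mem_cons.mp hb with rfl | hb
      · exact le_rfl
      · exact absurd hb (List.not_mem_nil)
    · obtain ⟨m, hm, hmax⟩ := ih hne
      rcases le_total (key m) (key a) with h | h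
      · refine ⟨a, List.mem_cons_self, ?_⟩
        intro b hb
        rcases List.mem_cons.mp hb with rfl | hb
        · exact le_rfl
        · exact (hmax b hb).trans h
      · refine ⟨m, List.mem_cons_of_mem a hm, ?_⟩
        intro b hb
        rcases List.mem_cons.mp hb with rfl | hb
        · exact h
        · exact hmax b hb

/-- Along a chain of horizontal (decreasing) arrows, the last target is smaller
than the first source. -/
lemma horiz_last_lt_head (hS : S.Valid) :
    ∀ (l : List S.Arr) (hne : l ≠ []), S.IsPathList l →
      (∀ f ∈ l, S.atgt f < S.asrc f) →
      S.atgt (l.getLast hne) < S.asrc (l.head hne) := by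
  intro l
  induction l with
  | nil => intro hne; exact absurd rfl hne
  | cons a t ih =>
    intro hne hch hall
    rcases eq_or_ne t [] with rfl | hne'
    · simpa using hall a (List.mem_cons_self)
    · have hch' : S.IsPathList t := hch.tail
      have ihh := ih hne' hch' (fun f hf => hall f (List.mem_cons_of_mem a hf))
      have hj : S.atgt a = S.asrc (t.head hne') := by
        have := (List.isChain_cons.mp hch).1 (t.head hne') (by
          rw [List.head?_eq_head hne']; rfl)
        exact this
      rw [List.getLast_cons hne']
      calc S.atgt (t.getLast hne') < S.asrc (t.head hne') := ihh
        _ = S.atgt a := hj.symm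
        _ < S.asrc a := hall a (List.mem_cons_self)

/-- Every directed cycle contains an inclined arrow. -/
lemma exists_incl (hS : S.Valid) {C : List S.Arr} (hC : S.IsCycList C) :
    ∃ f ∈ C, S.asrc f < S.atgt f := by
  by_contra h
  push_neg at h
  obtain ⟨hne, hch, hcl⟩ := hC
  have hall : ∀ f ∈ C, S.atgt f < S.asrc f := by
    intro f hf
    have hf2 : S.Arrow (S.asrc f) (S.atgt f) := f.2
    rcases arrow_cases S hS hf2 with ⟨-, h'⟩ | ⟨-, h'⟩
    · exact h'
    · exact absurd h' (not_lt.mpr (h f hf))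
  have hlt := horiz_last_lt_head S hS C hne hch hall
  have heq := hcl (C.head hne) (by rw [List.head?_eq_head hne]; rfl)
    (C.getLast hne) (by rw [List.getLast?_eq_getLast hne]; rfl)
  omega

/-- Rotating a cyclic list at an element yields a cyclic list. -/
lemma isCycList_rotate_split {l₁ l₂ : List S.Arr} {a : S.Arr}
    (h : S.IsCycList (l₁ ++ a :: l₂)) : S.IsCycList ((a :: l₂) ++ l₁) := by
  rcases eq_or_ne l₁ [] with rfl | hl1
  · simpa using h
  obtain ⟨-, hch, hcl⟩ := h
  obtain ⟨h1, h2, h12⟩ := List.isChain_append.mp hch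
  have hhead : (l₁ ++ a :: l₂).head? = some (l₁.head hl1) := by
    rw [List.head?_append_of_ne_nil _ hl1, List.head?_eq_head hl1]
  have hlast : (l₁ ++ a :: l₂).getLast? = ((a :: l₂).getLast (List.cons_ne_nil a l₂)) := by
    rw [List.getLast?_append, List.getLast?_eq_getLast (List.cons_ne_nil a l₂)]
    rfl
  refine ⟨by simp, List.isChain_append.mpr ⟨h2, h1, ?_⟩, ?_⟩
  · intro u hu v hv
    have hu' : u = (a :: l₂).getLast (List.cons_ne_nil a l₂) := by
      rw [List.getLast?_eq_getLast (List.cons_ne_nil a l₂)] at hu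
      exact (by simpa using hu : _ = u).symm
    have hv' : v = l₁.head hl1 := by
      rw [List.head?_eq_head hl1] at hv
      exact (by simpa using hv : _ = v).symm
    subst hu' hv'
    exact hcl _ (by rw [hhead]; rfl) _ (by rw [hlast]; rfl)
  · intro u hu v hv
    have hu' : u = a := by
      have : ((a :: l₂) ++ l₁).head? = some a := rfl
      rw [this] at hu
      exact (by simpa using hu : _ = u).symm
    have hv' : v = l₁.getLast hl1 := by
      rw [List.getLast?_append, List.getLast?_eq_getLast hl1] at hv
      exact (by simpa using hv : _ = v).symm
    subst hu' hv'
    exact h12 _ (by rw [List.getLast?_eq_getLast hl1]; rfl) _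
      (by rw [List.head?_cons]; rfl)

set_option maxHeartbeats 1600000 in
/-- Assume `Γ` is the path graph on `{1, …, r}`.  Every simple
(non-self-intersecting) directed cycle `C` of the BFZ quiver `Q^{u,e}` that is not
itself a face is differentiable with respect to some arrow: there exist a face `F` of
`Q^{u,e}` and an arrow `e` of `F` such that `e` does not lie on `C` and the arrows of
`F` other than `e` form a consecutive directed subpath of `C` (up to cyclic
rotation). -/
theorem simple_cycle_differentiable (hS : S.Valid) (hred : S.Reduced)
    (hpath : S.IsPathGraph)
    (C : List S.Arr) (hC : S.IsCycList C)
    (hsimple : (C.map S.asrc).Nodup)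
    (hnotface : ¬ S.IsFaceList C) :
    ∃ (F : List S.Arr) (e : S.Arr) (p : List S.Arr) (jF jC : ℕ),
      S.IsFaceList F ∧ F.rotate jF = e :: p ∧ e ∉ C ∧ p <:+: C.rotate jC := by
  classical
  -- an inclined arrow of `C` with maximal source
  obtain ⟨g, hgC, hgxy, hgmax⟩ : ∃ g ∈ C, S.asrc g < S.atgt g ∧
      ∀ f ∈ C, S.asrc f < S.atgt f → S.asrc f ≤ S.asrc g := by
    obtain ⟨f0, hf0C, hf0⟩ := exists_incl S hS hC
    have hf0A : f0 ∈ C.filter (fun f => decide (S.asrc f < S.atgt f)) := by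
      rw [List.mem_filter]
      exact ⟨hf0C, by simpa using hf0⟩
    obtain ⟨g, hgA, hgmax⟩ := exists_max_key S.asrc _ (List.ne_nil_of_mem hf0A)
    rw [List.mem_filter] at hgA
    refine ⟨g, hgA.1, by simpa using hgA.2, ?_⟩
    intro f hf hff
    exact hgmax f (by rw [List.mem_filter]; exact ⟨hf, by simpa using hff⟩)
  set x := S.asrc g with hx
  set y := S.atgt g with hy
  have hgarr : S.Arrow x y := g.2
  have hgIncl : S.InclArrow x y := by
    rcases arrow_cases S hS hgarr with ⟨-, h'⟩ | ⟨h', -⟩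
    · omega
    · exact h'
  have hxy : x < y := hgIncl.2.2.2.1
  have hysx : y < S.succ x := hgIncl.2.2.2.2.1
  have hnxy : S.node x ≠ S.node y := hgIncl.2.2.1.ne
  -- rotate `C` to start at `g`
  obtain ⟨l₁, l₂, hsplit⟩ := List.append_of_mem hgC
  set rest := l₂ ++ l₁ with hrest
  set D := g :: rest with hD
  have hDrot : C.rotate l₁.length = D := by
    rw [hsplit, List.rotate_eq_drop_append_take (by simp), List.drop_left, List.take_left]
    simp [hD, hrest]
  have hDcyc : S.IsCycList D := by
    have := isCycList_rotate_split S (hsplit ▸ hC)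
    simpa [hD, hrest] using this
  have hmemD : ∀ f : S.Arr, f ∈ D ↔ f ∈ C := by
    intro f; rw [← hDrot]; exact List.mem_rotate
  have hDnodup : (D.map S.asrc).Nodup := by
    rw [← hDrot, List.map_rotate]
    exact (List.rotate_perm (C.map S.asrc) l₁.length).nodup_iff.mpr hsimple
  have hDch : List.Chain' (fun e f => S.atgt e = S.asrc f) D := hDcyc.2.1
  have hrch : List.Chain' (fun e f => S.atgt e = S.asrc f) rest := hDch.tail
  have hrest_ne : rest ≠ [] := by
    intro h
    have hcl := hDcyc.2.2 g (by rw [hD, h]; rfl) g (by rw [hD, h]; rfl)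
    omega
  have hrlen : 0 < rest.length := List.length_pos_iff.mpr hrest_ne
  -- the stretch of vertices after `g`
  set w : ℕ → ℤ := fun j => S.asrc (rest.getD j g) with hwdef
  have hwget : ∀ j (h : j < rest.length), w j = S.asrc (rest[j]'h) := by
    intro j h
    rw [hwdef]
    simp only []
    rw [List.getD_eq_getElem rest g h]
  have hstep : ∀ j : ℕ, j + 1 < rest.length →
      S.atgt (rest.getD j g) = w (j + 1) := by
    intro j hj
    have h := List.isChain_iff_getElem.mp hrch j (by omega)
    rw [hwget (j+1) hj, List.getD_eq_getElem rest g (by omega)]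
    simpa using h
  have hw0 : w 0 = y := by
    have h := List.isChain_iff_getElem.mp hDch 0 (by simp only [hD, List.length_cons]; omega)
    rw [hwget 0 hrlen]
    simp only [hD, List.getElem_cons_zero, List.getElem_cons_succ] at h
    exact h.symm
  have hclose : S.atgt (rest.getD (rest.length - 1) g) = x := by
    have hDne : D ≠ [] := by simp [hD]
    have hcl := hDcyc.2.2 g (by rw [hD]; rfl) (D.getLast hDne)
      (by rw [List.getLast?_eq_getLast hDne]; rfl)
    have hDl : D.getLast hDne = rest.getLast hrest_ne := List.getLast_cons hrest_ne
    rw [hDl, List.getLast_eq_getElem hrest_ne] at hcl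
    rw [List.getD_eq_getElem rest g (by omega)]
    exact hcl
  have harr : ∀ f : S.Arr, S.Arrow (S.asrc f) (S.atgt f) := fun f => f.2
  have hhor : ∀ j, j < rest.length → ¬(S.asrc (rest.getD j g) < S.atgt (rest.getD j g)) →
      S.HorArrow (S.asrc (rest.getD j g)) (S.atgt (rest.getD j g)) := by
    intro j hj hnot
    rcases arrow_cases S hS (harr (rest.getD j g)) with ⟨h', -⟩ | ⟨-, h'⟩
    · exact h'
    · exact absurd h' hnot
  -- there is an inclined arrow after `g`
  have hPex : ∃ j : ℕ, j < rest.length ∧ S.asrc (rest.getD j g) < S.atgt (rest.getD j g) := by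
    by_contra hno
    push_neg at hno
    have hnode : ∀ j, j < rest.length → S.node (w j) = S.node y := by
      intro j
      induction j with
      | zero => intro _; rw [hw0]
      | succ j ih =>
        intro hj
        have hj' : j < rest.length := by omega
        have hh := hhor j hj' (not_lt.mpr (hno j hj'))
        have hfacts := hor_facts S hS hh
        have hstepj := hstep j hj
        rw [hstepj] at hfacts
        rw [← hfacts.1]
        exact ih hj'
    have hj0 : rest.length - 1 < rest.length := by omega
    have hh := hhor _ hj0 (not_lt.mpr (hno _ hj0))
    have hfacts := hor_facts S hS hh
    rw [hclose] at hfacts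
    have := hnode _ hj0
    rw [hwget _ hj0] at this
    rw [List.getD_eq_getElem rest g hj0] at hfacts
    exact hnxy (hfacts.1.symm.trans this)
  set k := Nat.find hPex with hkdef
  obtain ⟨hklen, hkincl⟩ : k < rest.length ∧
      S.asrc (rest.getD k g) < S.atgt (rest.getD k g) := Nat.find_spec hPex
  have hkmin : ∀ j, j < k → ¬(S.asrc (rest.getD j g) < S.atgt (rest.getD j g)) := by
    intro j hj hcon
    exact Nat.find_min hPex hj ⟨by omega, hcon⟩
  -- the horizontal steps of the stretch
  have hstepk : ∀ j, j < k → w j = S.succ (w (j + 1)) ∧ S.HorArrow (w j) (w (j + 1)) := by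
    intro j hj
    have hh := hhor j (by omega) (hkmin j hj)
    rw [hstep j (by omega)] at hh
    exact ⟨hh.2.1, hh⟩
  -- facts about the stretch vertices
  have hW : ∀ j, j ≤ k → (S.node (w j) = S.node y ∧ w j ≤ y ∧ S.Idx (w j)) ∧
      ∀ d, d < j → w j < w d := by
    intro j
    induction j with
    | zero =>
      intro _
      exact ⟨⟨by rw [hw0], by rw [hw0], hw0 ▸ hgIncl.2.1⟩, by omega⟩
    | succ j ih =>
      intro hj
      have hj' : j ≤ k := by omega
      obtain ⟨⟨ihn, ihle, ihidx⟩, ihdec⟩ := ih hj'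
      obtain ⟨hse, hhor'⟩ := hstepk j (by omega)
      have hfacts := hor_facts S hS hhor'
      refine ⟨⟨hfacts.1.symm.trans ihn, by omega, hfacts.2.2.1⟩, ?_⟩
      intro d hd
      rcases Nat.lt_succ_iff_lt_or_eq.mp hd with hd' | rfl
      · exact (hfacts.2.2.2).trans (ihdec d hd')
      · exact hfacts.2.2.2
  have hkC : rest.getD k g ∈ C := by
    rw [← hmemD]
    rw [List.getD_eq_getElem rest g hklen]
    exact List.mem_cons_of_mem g (List.getElem_mem hklen)
  have htx : w k < x := by
    have hle := hgmax _ hkC hkincl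
    have hnodet : S.node (w k) = S.node y := ((hW k le_rfl).1).1
    have hne : w k ≠ x := fun h => hnxy (h ▸ hnodet)
    have hle' : w k ≤ x := hle
    omega
  -- the first stretch vertex below `x`
  have hQex : ∃ j : ℕ, j ≤ k ∧ w j < x := ⟨k, le_rfl, htx⟩
  set i := Nat.find hQex with hidef
  obtain ⟨hik, hix⟩ : i ≤ k ∧ w i < x := Nat.find_spec hQex
  have himin : ∀ j, j < i → x < w j := by
    intro j hj
    have h1 := Nat.find_min hQex hj
    have hjk : j ≤ k := by omega
    have h2 : ¬ w j < x := fun hlt => h1 ⟨hjk, hlt⟩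
    have hnodej : S.node (w j) = S.node y := ((hW j hjk).1).1
    have hne : w j ≠ x := fun h => hnxy (h ▸ hnodej)
    omega
  have hi1 : 1 ≤ i := by
    by_contra h
    have h0 : i = 0 := by omega
    rw [h0, hw0] at hix
    omega
  obtain ⟨hsucci, hhori⟩ := hstepk (i - 1) (by omega)
  have hi1' : w (i - 1 + 1) = w i := by
    have : i - 1 + 1 = i := by omega
    rw [this]
  rw [hi1'] at hsucci hhori
  -- the new inclined arrow `e : s → x`
  have hxs2 : x < S.succ (w i) := by
    rw [← hsucci]
    exact himin (i - 1) (by omega)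
  have hsucclt : S.succ (w i) < S.succ x := by
    rw [← hsucci]
    have := ((hW (i - 1) (by omega)).1).2.1
    omega
  have heIncl : S.InclArrow (w i) x :=
    ⟨((hW i hik).1).2.2, hgIncl.1,
      (((hW i hik).1).1) ▸ hgIncl.2.2.1.symm, hix, hxs2, hsucclt⟩
  set e : S.Arr := ⟨(w i, x), Or.inr heIncl⟩ with hedef
  have hesrc : S.asrc e = w i := rfl
  have hetgt : S.atgt e = x := rfl
  -- the face
  set S' := rest.take i with hS'def
  have hSlen : S'.length = i := by
    rw [hS'def, List.length_take]
    omega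
  have hS'get : ∀ j (hj : j < i), S'[j]'(by omega) = rest[j]'(by omega) := by
    intro j hj
    exact List.getElem_take
  have hS'src : ∀ j (hj : j < i), S.asrc (S'[j]'(by omega)) = w j := by
    intro j hj
    rw [hS'get j hj, ← hwget j (by omega)]
  have hS'mem : ∀ j (hj : j < i), (S'[j]'(by omega)) ∈ S' := fun j hj =>
    List.getElem_mem (by omega)
  have hS'D : ∀ f ∈ S', f ∈ D := by
    intro f hf
    exact List.mem_cons_of_mem g (List.mem_of_mem_take (hS'def ▸ hf))
  set F : List S.Arr := e :: g :: S' with hFdef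
  have hmemS' : ∀ u, u ∈ S'.map S.asrc ↔ ∃ j, ∃ _ : j < i, u = w j := by
    intro u
    constructor
    · intro hu
      obtain ⟨j, hj, hju⟩ := List.mem_iff_getElem.mp hu
      rw [List.getElem_map] at hju
      have hj' : j < i := by
        rw [List.length_map, hSlen] at hj
        exact hj
      exact ⟨j, hj', by rw [← hju, hS'src j hj']⟩
    · rintro ⟨j, hj, rfl⟩
      exact List.mem_map.mpr ⟨S'[j]'(by omega), hS'mem j hj, hS'src j hj⟩
  have hFsrc : ∀ u, u ∈ F.map S.asrc ↔ (u = w i ∨ u = x ∨ ∃ j, ∃ _ : j < i, u = w j) := by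
    intro u
    rw [hFdef]
    simp only [List.map_cons, List.mem_cons, hesrc, ← hx]
    rw [hmemS' u]
  -- further structural facts
  have hS'ne : S' ≠ [] := by
    intro h
    have := hSlen
    rw [h] at this
    simp at this
    omega
  have hS'tgt : ∀ d (hd : d < i), S.atgt (S'[d]'(by omega)) = w (d + 1) := by
    intro d hd
    rw [hS'get d hd]
    have h := hstep d (by omega)
    rw [List.getD_eq_getElem rest g (by omega)] at h
    exact h
  have hgF : g ∈ F := by rw [hFdef]; exact List.mem_cons_of_mem _ (List.mem_cons_self)
  have heF : e ∈ F := by rw [hFdef]; exact List.mem_cons_self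
  have hSF : ∀ d (hd : d < i), (S'[d]'(by omega)) ∈ F := by
    intro d hd
    rw [hFdef]
    exact List.mem_cons_of_mem _ (List.mem_cons_of_mem _ (hS'mem d hd))
  -- sources of `F` are nodup
  have hFnodup : (F.map S.asrc).Nodup := by
    rw [hFdef]
    simp only [List.map_cons, hesrc, ← hx]
    rw [List.nodup_cons, List.nodup_cons]
    refine ⟨?_, ?_, ?_⟩
    · intro hmem
      rcases List.mem_cons.mp hmem with h | h
      · omega
      · rw [hmemS'] at h
        obtain ⟨j, hj, hjeq⟩ := h
        have := himin j hj
        omega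
    · intro hmem
      rw [hmemS'] at hmem
      obtain ⟨j, hj, hjeq⟩ := hmem
      have := himin j hj
      omega
    · show List.Pairwise (· ≠ ·) (S'.map S.asrc)
      apply List.pairwise_iff_getElem.mpr
      intro a b ha hb hab
      rw [List.length_map, hSlen] at ha hb
      rw [List.getElem_map, List.getElem_map]
      rw [hS'src a ha, hS'src b hb]
      have := (hW b (by omega)).2 a hab
      omega
  -- normal form for sources of `F`
  have hsrcW : ∀ u, (u = w i ∨ u = x ∨ ∃ j, ∃ _ : j < i, u = w j) →
      u = x ∨ ∃ j, j ≤ i ∧ u = w j := by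
    rintro u (rfl | rfl | ⟨j, hj, rfl⟩)
    · exact Or.inr ⟨i, le_rfl, rfl⟩
    · exact Or.inl rfl
    · exact Or.inr ⟨j, by omega, rfl⟩
  -- chordlessness of `F`
  have hchord : ∀ u v, (u = x ∨ ∃ j, j ≤ i ∧ u = w j) → (v = x ∨ ∃ j, j ≤ i ∧ v = w j) →
      S.Arrow u v → ∃ f ∈ F, S.asrc f = u ∧ S.atgt f = v := by
    intro u v hu hv harrow
    rcases arrow_cases S hS harrow with ⟨hho, hvu⟩ | ⟨hin, huv⟩
    · -- horizontal
      have hfacts := hor_facts S hS hho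
      rcases hv with rfl | ⟨j, hji, rfl⟩
      · -- v = x : impossible
        exfalso
        rcases hu with rfl | ⟨j, hji, rfl⟩
        · omega
        · have h1 : S.node (w j) = S.node y := ((hW j (by omega)).1).1
          exact hnxy (hfacts.1.symm.trans h1)
      · rcases Nat.eq_zero_or_pos j with rfl | hj0
        · -- v = y : impossible since u = succ y > y
          exfalso
          have hy' : u = S.succ y := by rw [← hw0]; exact hho.2.1
          have hyy : y < S.succ y := valid_succ_gt S hS hgIncl.2.1
          rcases hu with rfl | ⟨d, hdi, rfl⟩
          · omega
          · have := ((hW d (by omega)).1).2.1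
            omega
        · -- the horizontal arrow of the stretch
          have hj1 : j - 1 < i := by omega
          have hstepj := hstepk (j - 1) (by omega)
          have hjj : j - 1 + 1 = j := by omega
          rw [hjj] at hstepj
          refine ⟨S'[j-1]'(by omega), hSF (j-1) hj1, ?_, ?_⟩
          · rw [hS'src (j-1) hj1, hstepj.1]
            exact hho.2.1.symm
          · rw [hS'tgt (j-1) hj1, hjj]
    · -- inclined
      obtain ⟨hIu, hIv, hadj, h1, h2, h3⟩ := hin
      rcases hu with rfl | ⟨j, hji, rfl⟩
      · rcases hv with rfl | ⟨j, hji, rfl⟩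
        · omega
        · rcases Nat.eq_zero_or_pos j with rfl | hj0
          · refine ⟨g, hgF, hx.symm, ?_⟩
            rw [hw0]
          · exfalso
            have hst := hstepk (j - 1) (by omega)
            have hjj : j - 1 + 1 = j := by omega
            rw [hjj] at hst
            have hwle : w (j - 1) ≤ y := ((hW (j - 1) (by omega)).1).2.1
            have := hst.1
            omega
      · rcases hv with rfl | ⟨d, hdi, rfl⟩
        · -- v = x, u below the string : u = w i and the arrow is e
          have hji' : j = i := by
            by_contra hne'
            have hlt : j < i := by omega
            have := himin j hlt
            omega
          subst hji'
          exact ⟨e, heF, hesrc, hetgt⟩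
        · exfalso
          have hn1 : S.node (w j) = S.node y := ((hW j (by omega)).1).1
          have hn2 : S.node (w d) = S.node y := ((hW d (by omega)).1).1
          exact hadj.ne (hn1.trans hn2.symm)
  -- `F` is a face
  have hF_ne : F ≠ [] := by rw [hFdef]; exact List.cons_ne_nil _ _
  have hFface : S.IsFaceList F := by
    refine ⟨⟨hF_ne, ?_, ?_⟩, hFnodup, ?_⟩
    · -- chain
      rw [hFdef]
      refine List.isChain_cons.mpr ⟨?_, List.isChain_cons.mpr ⟨?_, ?_⟩⟩
      · intro b hb
        have hb' : b = g := by
          have : g = b := by simpa using hb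
          exact this.symm
        subst hb'
        rw [hetgt, hx]
      · intro b hb
        rw [List.head?_eq_head hS'ne] at hb
        have hb' : b = S'.head hS'ne := by
          have : S'.head hS'ne = b := by simpa using hb
          exact this.symm
        subst hb'
        have h0 : S'.head hS'ne = S'[0]'(by omega) := List.head_eq_getElem hS'ne
        rw [h0, hS'src 0 (by omega), hw0]
      · have h := hrch
        rw [← List.take_append_drop i rest] at h
        exact (List.isChain_append.mp h).1
    · -- cyclic closure
      intro a ha f hf
      have ha' : a = e := by
        rw [hFdef] at ha
        have : e = a := by simpa using ha
        exact this.symm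
      have hfl : f = F.getLast hF_ne := by
        rw [List.getLast?_eq_getLast hF_ne] at hf
        have : F.getLast hF_ne = f := by simpa using hf
        exact this.symm
      subst ha' hfl
      have hFlast : F.getLast hF_ne = S'.getLast hS'ne :=
        (List.getLast_cons (List.cons_ne_nil g S')).trans (List.getLast_cons hS'ne)
      rw [hFlast, List.getLast_eq_getElem hS'ne]
      have hlen1 : S'.length - 1 < i := by omega
      have hidx : w (S'.length - 1 + 1) = w i := by
        rw [show S'.length - 1 + 1 = i by omega]
      rw [hS'tgt (S'.length - 1) hlen1, hidx, hesrc]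
    · -- chordless
      intro u v hu hv harrow
      rw [hFsrc] at hu hv
      exact hchord u v (hsrcW u hu) (hsrcW v hv) harrow
  -- conclusion
  by_cases heC : e ∈ C
  · -- then `C` itself is the face `F`, contradiction
    exfalso
    have heD : e ∈ D := (hmemD e).mpr heC
    have hinj := List.inj_on_of_nodup_map hDnodup
    have hieq : i = k := by
      by_contra hne'
      have hik2 : i < k := by omega
      have hmemr : rest[i]'(by omega) ∈ D :=
        List.mem_cons_of_mem g (List.getElem_mem (by omega))
      have hsame : S.asrc (rest[i]'(by omega)) = S.asrc e := by
        rw [hesrc, hwget i (by omega)]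
      have heq := hinj hmemr heD hsame
      have hmin := hkmin i hik2
      rw [List.getD_eq_getElem rest g (by omega), heq] at hmin
      exact hmin (by rw [hesrc, hetgt]; exact hix)
    have hrk : rest[k]'hklen = e := by
      apply hinj (List.mem_cons_of_mem g (List.getElem_mem hklen)) heD
      rw [hesrc, hieq, hwget k hklen]
    have hlen2 : rest.length = k + 1 := by
      by_contra hlen'
      have hk1 : k + 1 < rest.length := by omega
      have hmem1 : rest[k+1]'hk1 ∈ D := List.mem_cons_of_mem g (List.getElem_mem hk1)
      have hsrck1 : S.asrc (rest[k+1]'hk1) = x := by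
        have h := hstep k hk1
        rw [List.getD_eq_getElem rest g hklen, hrk, hetgt] at h
        rw [hwget (k+1) hk1] at h
        exact h.symm
      have hgg := hinj hmem1 (List.mem_cons_self (a := g) (l := rest)) (by rw [hsrck1, hx])
      have hDnd : D.Nodup := List.Nodup.of_map S.asrc hDnodup
      rw [hD, List.nodup_cons] at hDnd
      exact hDnd.1 (hgg ▸ List.getElem_mem hk1)
    have hdrop : rest.drop i = [e] := by
      rw [hieq, List.drop_eq_getElem_cons hklen, hrk,
        List.drop_eq_nil_of_le (by omega)]
    have hres : rest = S' ++ [e] := by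
      rw [hS'def, ← hdrop]
      exact (List.take_append_drop i rest).symm
    apply hnotface
    refine ⟨hC, hsimple, ?_⟩
    have hCD : ∀ u, u ∈ C.map S.asrc ↔ u ∈ D.map S.asrc := by
      intro u
      rw [← hDrot, List.map_rotate]
      exact (List.mem_rotate).symm
    have hperm : (D.map S.asrc).Perm (F.map S.asrc) := by
      rw [hFdef, hD, hres]
      simp only [List.map_cons, List.map_append]
      refine ((List.Perm.cons _ (List.perm_append_singleton _ _)).trans ?_)
      exact List.Perm.swap _ _ _
    have hDF : ∀ u, u ∈ D.map S.asrc ↔ u ∈ F.map S.asrc := fun u => hperm.mem_iff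
    intro u v hu hv harrow
    obtain ⟨f, hfF, hfu, hfv⟩ := hchord u v
      (hsrcW u ((hFsrc u).mp ((hDF u).mp ((hCD u).mp hu))))
      (hsrcW v ((hFsrc v).mp ((hDF v).mp ((hCD v).mp hv)))) harrow
    refine ⟨f, ?_, hfu, hfv⟩
    rw [← hmemD f]
    rw [hFdef] at hfF
    rcases List.mem_cons.mp hfF with hfe | hfF'
    · rw [hfe, hD, hres]
      exact List.mem_cons_of_mem _ (List.mem_append_right _ (List.mem_singleton.mpr rfl))
    · rcases List.mem_cons.mp hfF' with hfg | hf'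
      · rw [hfg]
        exact List.mem_cons_self
      · exact hS'D f hf'
  · -- the face differentiates `C`
    refine ⟨F, e, g :: S', 0, l₁.length, hFface, by rw [List.rotate_zero, hFdef], heC, ?_⟩
    rw [hDrot]
    have hpre : (g :: S') <+: D := by
      refine ⟨rest.drop i, ?_⟩
      rw [hD, hS'def, List.cons_append, List.take_append_drop]
    exact hpre.isInfix

end BFZe
end
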